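/- Orlicz–Pettis theorem: if a series ∑ x_n in a Banach space X is such that every subseries ∑_{n∈M} x_n converges weakly (for every M ⊆ ℕ), then every subseries converges in norm; i.e., the series is unconditionally norm convergent. -/

import Mathlib

open Filter Topology Classical MeasureTheory TopologicalSpace

noncomputable section OrliczPettisAux

namespace OPaux

abbrev G : Type := ℕ → ZMod 2

def μG : Measure G := Measure.addHaarMeasure ⊤

instance : IsProbabilityMeasure μG :=
  ⟨by simpa [μG] using Measure.addHaarMeasure_self (K₀ := (⊤ : TopologicalSpace.PositiveCompacts G))⟩

instance : μG.IsAddLeftInvariant := by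
  unfold μG; infer_instance

def r (n : ℕ) (t : G) : ℝ := if t n = 0 then 1 else -1

lemma r_continuous (n : ℕ) : Continuous (r n) := by
  have h1 : Continuous fun t : G => t n := continuous_apply n
  exact (continuous_of_discreteTopology (f := fun v : ZMod 2 => if v = 0 then (1:ℝ) else -1)).comp h1

lemma r_abs (n : ℕ) (t : G) : |r n t| = 1 := by
  unfold r; split <;> norm_num

lemma r_sq (n : ℕ) (t : G) : r n t * r n t = 1 := by
  unfold r; split <;> norm_num

lemma r_add_single_ne {n k : ℕ} (hnk : n ≠ k) (t : G) :
    r n (Pi.single k 1 + t) = r n t := by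
  simp [r, Pi.single_eq_of_ne hnk]

lemma r_add_single_self (k : ℕ) (t : G) :
    r k (Pi.single k 1 + t) = - r k t := by
  simp only [r, Pi.add_apply, Pi.single_eq_same]
  generalize t k = v
  fin_cases v <;> simp <;> split_ifs <;> simp_all <;> contradiction

lemma r_integrable_mul (n k : ℕ) : Integrable (fun t => r n t * r k t) μG :=
  (Continuous.mul (r_continuous n) (r_continuous k)).integrable_of_hasCompactSupport
    (HasCompactSupport.of_compactSpace _)

lemma integral_r_mul_r (n k : ℕ) :
    ∫ t, r n t * r k t ∂μG = if n = k then 1 else 0 := by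
  rcases eq_or_ne n k with rfl | hnk
  · simp only [if_pos rfl]
    rw [show (fun t => r n t * r n t) = fun _ => (1:ℝ) from funext fun t => r_sq n t]
    simp
  · rw [if_neg hnk]
    have key : ∫ t, r n t * r k t ∂μG = - ∫ t, r n t * r k t ∂μG := by
      conv_lhs => rw [← integral_add_left_eq_self (μ := μG) (fun t => r n t * r k t) (Pi.single k 1)]
      rw [← integral_neg]
      refine integral_congr_ae (Eventually.of_forall fun t => ?_)
      show r n (Pi.single k 1 + t) * r k (Pi.single k 1 + t) = -(r n t * r k t)
      rw [r_add_single_ne hnk, r_add_single_self]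
      ring
    linarith

lemma r_memℒ2 (n : ℕ) : MemLp (r n) 2 μG :=
  MemLp.of_bound ((r_continuous n).aestronglyMeasurable) 1
    (Eventually.of_forall fun t => by rw [Real.norm_eq_abs, r_abs])

def R (n : ℕ) : Lp ℝ 2 μG := (r_memℒ2 n).toLp (r n)

lemma R_orthonormal : Orthonormal ℝ R := by
  rw [orthonormal_iff_ite]
  intro n k
  have hcn : (R n : G → ℝ) =ᵐ[μG] r n := (r_memℒ2 n).coeFn_toLp
  have hck : (R k : G → ℝ) =ᵐ[μG] r k := (r_memℒ2 k).coeFn_toLp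
  have h1 : (inner ℝ (R n) (R k) : ℝ) = ∫ t, r n t * r k t ∂μG := by
    rw [L2.inner_def]
    refine integral_congr_ae ?_
    filter_upwards [hcn, hck] with t h1 h2
    rw [RCLike.inner_apply', conj_trivial, h1, h2]
  rw [h1, integral_r_mul_r]

lemma tendsto_inner_R (g : Lp ℝ 2 μG) :
    Tendsto (fun n => (inner ℝ (R n) g : ℝ)) atTop (𝓝 0) := by
  have hsum : Summable fun n => ‖(inner ℝ (R n) g : ℝ)‖ ^ 2 :=
    R_orthonormal.inner_products_summable g
  have h2 := hsum.tendsto_atTop_zero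
  have h3 : Tendsto (fun n => ‖(inner ℝ (R n) g : ℝ)‖) atTop (𝓝 0) := by
    have h5 := h2.sqrt
    rw [Real.sqrt_zero] at h5
    have h4 : ∀ n, Real.sqrt (‖(inner ℝ (R n) g : ℝ)‖ ^ 2) = ‖(inner ℝ (R n) g : ℝ)‖ :=
      fun n => Real.sqrt_sq (norm_nonneg _)
    simp only [h4] at h5
    exact h5
  exact tendsto_zero_iff_norm_tendsto_zero.mpr h3

variable {X : Type*} [NormedAddCommGroup X] [NormedSpace ℝ X] [CompleteSpace X]

lemma integrable_rsmul {h : G → X} (hi : Integrable h μG) (n : ℕ) :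
    Integrable (fun t => r n t • h t) μG := by
  refine hi.norm.mono' (((r_continuous n).stronglyMeasurable.aestronglyMeasurable).smul
    hi.aestronglyMeasurable) (Eventually.of_forall fun t => ?_)
  rw [norm_smul, Real.norm_eq_abs, r_abs, one_mul]

/-- Riemann-Lebesgue for Rademacher system. -/
lemma tendsto_integral_rsmul_zero {f : G → X} (hf : Integrable f μG) :
    Tendsto (fun n => ∫ t, r n t • f t ∂μG) atTop (𝓝 0) := by
  refine Integrable.induction (μ := μG)
    (P := fun f => Tendsto (fun n => ∫ t, r n t • f t ∂μG) atTop (𝓝 0)) ?_ ?_ ?_ ?_ hf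
  · -- indicator
    intro c s hs hμs
    have hrw : ∀ n, ∫ t, r n t • (s.indicator (fun _ => c)) t ∂μG
        = (∫ t, (s.indicator (r n)) t ∂μG) • c := by
      intro n
      rw [← integral_smul_const]
      refine integral_congr_ae (Eventually.of_forall fun t => ?_)
      by_cases ht : t ∈ s <;> simp [Set.indicator_of_mem, Set.indicator_of_notMem, ht]
    simp only [hrw]
    have hind : MemLp (s.indicator (fun _ => (1:ℝ))) 2 μG :=
      MemLp.of_bound ((stronglyMeasurable_const.indicator hs).aestronglyMeasurable) 1
        (Eventually.of_forall fun t => by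
          by_cases ht : t ∈ s <;> simp [Set.indicator_of_mem, Set.indicator_of_notMem, ht])
    have key : Tendsto (fun n => ∫ t, (s.indicator (r n)) t ∂μG) atTop (𝓝 0) := by
      have h1 : ∀ n, ∫ t, (s.indicator (r n)) t ∂μG = (inner ℝ (R n) (hind.toLp _) : ℝ) := by
        intro n
        rw [L2.inner_def]
        refine integral_congr_ae ?_
        filter_upwards [(r_memℒ2 n).coeFn_toLp, hind.coeFn_toLp] with t h1 h2
        rw [show (R n : G → ℝ) = ((r_memℒ2 n).toLp (r n) : G → ℝ) from rfl, h1, h2,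
          RCLike.inner_apply', conj_trivial]
        by_cases ht : t ∈ s <;>
          simp [Set.indicator_of_mem, Set.indicator_of_notMem, ht, mul_comm]
      simp only [h1]
      exact tendsto_inner_R _
    simpa using key.smul_const c
  · -- add
    intro f g _ hfi hgi hPf hPg
    have hrw : ∀ n, ∫ t, r n t • (f + g) t ∂μG
        = (∫ t, r n t • f t ∂μG) + ∫ t, r n t • g t ∂μG := by
      intro n
      rw [← integral_add (integrable_rsmul hfi n) (integrable_rsmul hgi n)]
      refine integral_congr_ae (Eventually.of_forall fun t => ?_)
      simp [smul_add]
    simp only [hrw]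
    simpa using hPf.add hPg
  · -- closed
    refine isClosed_of_closure_subset ?_
    intro F hF
    show Tendsto (fun n => ∫ t, r n t • (F : G → X) t ∂μG) atTop (𝓝 0)
    rw [NormedAddCommGroup.tendsto_nhds_zero]
    intro ε hε
    obtain ⟨H, hHmem, hHF⟩ := Metric.mem_closure_iff.1 hF (ε/2) (by linarith)
    have hHt : Tendsto (fun n => ∫ t, r n t • (H : G → X) t ∂μG) atTop (𝓝 0) := hHmem
    have hbound : ∀ n, ‖(∫ t, r n t • (F : G → X) t ∂μG) - ∫ t, r n t • (H : G → X) t ∂μG‖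
        ≤ dist F H := by
      intro n
      rw [← integral_sub (integrable_rsmul (L1.integrable_coeFn F) n)
        (integrable_rsmul (L1.integrable_coeFn H) n)]
      calc ‖∫ t, (r n t • (F : G → X) t - r n t • (H : G → X) t) ∂μG‖
          ≤ ∫ t, ‖r n t • (F : G → X) t - r n t • (H : G → X) t‖ ∂μG :=
            norm_integral_le_integral_norm _
        _ = ∫ t, ‖(F : G → X) t - (H : G → X) t‖ ∂μG := by
            refine integral_congr_ae (Eventually.of_forall fun t => ?_)
            show ‖r n t • (F : G → X) t - r n t • (H : G → X) t‖ = ‖(F : G → X) t - (H : G → X) t‖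
            rw [← smul_sub, norm_smul, Real.norm_eq_abs, r_abs, one_mul]
        _ = dist F H := by
            rw [dist_eq_norm, L1.norm_eq_integral_norm]
            refine integral_congr_ae ?_
            filter_upwards [Lp.coeFn_sub F H] with t ht
            rw [ht, Pi.sub_apply]
    rw [NormedAddCommGroup.tendsto_nhds_zero] at hHt
    filter_upwards [hHt (ε/2) (by linarith)] with n hn
    calc ‖∫ t, r n t • (F : G → X) t ∂μG‖
        ≤ ‖(∫ t, r n t • (F : G → X) t ∂μG) - ∫ t, r n t • (H : G → X) t ∂μG‖
          + ‖∫ t, r n t • (H : G → X) t ∂μG‖ := by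
            simpa using norm_add_le ((∫ t, r n t • (F : G → X) t ∂μG)
              - ∫ t, r n t • (H : G → X) t ∂μG) (∫ t, r n t • (H : G → X) t ∂μG)
      _ < ε/2 + ε/2 := by
            have := hbound n
            exact add_lt_add_of_le_of_lt (this.trans hHF.le) hn
      _ = ε := by ring
  · -- ae congr
    intro f g hfg _ hPf
    refine hPf.congr fun n => ?_
    refine integral_congr_ae ?_
    filter_upwards [hfg] with t ht
    rw [ht]


variable {α : Type*} [MeasurableSpace α]

/-- Pettis measurability: a weakly measurable function with values in a separable,
subtraction-closed set is measurable. -/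
lemma measurable_of_weakly_measurable [MeasurableSpace X] [BorelSpace X] {f : α → X} {s : Set X}
    (hsep : IsSeparable s) (hfs : ∀ t, f t ∈ s)
    (hsub : ∀ a b, a ∈ s → b ∈ s → a - b ∈ s)
    (hw : ∀ φ : X →L[ℝ] ℝ, Measurable fun t => φ (f t)) : Measurable f := by
  -- countable dense subset of s, contained in s
  obtain ⟨c, hc_count, hc_sub, hc_dense⟩ :
      ∃ c : Set X, c.Countable ∧ c ⊆ s ∧ s ⊆ closure c := by
    haveI := hsep.separableSpace
    obtain ⟨D, hD_count, hD_dense⟩ := TopologicalSpace.exists_countable_dense s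
    refine ⟨Subtype.val '' D, hD_count.image _, by rintro _ ⟨d, _, rfl⟩; exact d.2, ?_⟩
    intro z hz
    have h1 : (⟨z, hz⟩ : s) ∈ closure D := hD_dense _
    have h3 : z ∈ Subtype.val '' (closure D) := ⟨⟨z, hz⟩, h1, rfl⟩
    exact image_closure_subset_closure_image continuous_subtype_val h3
  -- norming functionals
  have hΦex : ∀ d : X, ∃ φ : X →L[ℝ] ℝ, ‖φ‖ ≤ 1 ∧ φ d = ‖d‖ := fun d =>
    exists_dual_vector'' ℝ d
  choose Φ hΦ1 hΦ2 using hΦex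
  -- the key norming estimate on `s`
  have key : ∀ z ∈ s, ∀ q : ℝ, (∀ d ∈ c, Φ d z ≤ q) → ‖z‖ ≤ q := by
    intro z hz q hq
    refine le_of_forall_pos_le_add fun δ hδ => ?_
    obtain ⟨d, hdc, hdz⟩ := Metric.mem_closure_iff.1 (hc_dense hz) (δ/2) (by linarith)
    have h1 : ‖z‖ ≤ ‖d‖ + δ/2 := by
      have := norm_le_norm_add_norm_sub' z d  -- ‖z‖ ≤ ‖d‖ + ‖z - d‖?
      have h2 : ‖z - d‖ ≤ δ/2 := by rw [← dist_eq_norm]; exact hdz.le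
      calc ‖z‖ ≤ ‖d‖ + ‖z - d‖ := by
              have := norm_sub_norm_le z d
              linarith [abs_le.1 (abs_norm_sub_norm_le z d)]
        _ ≤ ‖d‖ + δ/2 := by linarith
    have h3 : ‖d‖ ≤ Φ d z + δ/2 := by
      have h4 : Φ d d - Φ d z = Φ d (d - z) := by rw [map_sub]
      have h5 : Φ d (d - z) ≤ ‖d - z‖ := by
        calc Φ d (d - z) ≤ ‖Φ d (d - z)‖ := (le_abs_self _).trans (Real.norm_eq_abs _).ge
          _ ≤ ‖Φ d‖ * ‖d - z‖ := (Φ d).le_opNorm _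
          _ ≤ 1 * ‖d - z‖ := by
              exact mul_le_mul_of_nonneg_right (hΦ1 d) (norm_nonneg _)
          _ = ‖d - z‖ := one_mul _
      have h6 : ‖d - z‖ ≤ δ/2 := by
        rw [← dist_eq_norm, dist_comm, dist_eq_norm, ← dist_eq_norm] at *
        rw [dist_comm]
        exact hdz.le
      have := hΦ2 d
      linarith [h4 ▸ h5]
    linarith [hq d hdc]
  -- preimages of balls around points of `c` are measurable
  have hball : ∀ d ∈ c, ∀ ρ : ℝ, MeasurableSet (f ⁻¹' Metric.ball d ρ) := by
    intro d hdc ρ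
    have heq : f ⁻¹' Metric.ball d ρ =
        ⋃ (q' : ℚ) (_ : (q' : ℝ) < ρ), ⋂ d' ∈ c, {t | Φ d' (f t - d) ≤ (q' : ℝ)} := by
      ext t
      simp only [Set.mem_preimage, Metric.mem_ball, Set.mem_iUnion, Set.mem_iInter,
        Set.mem_setOf_eq, dist_eq_norm]
      constructor
      · intro h
        obtain ⟨q', hq1, hq2⟩ := exists_rat_btwn h
        exact ⟨q', hq2, fun d' _ => by
          calc Φ d' (f t - d) ≤ ‖Φ d' (f t - d)‖ := (le_abs_self _).trans (Real.norm_eq_abs _).ge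
            _ ≤ ‖Φ d'‖ * ‖f t - d‖ := (Φ d').le_opNorm _
            _ ≤ 1 * ‖f t - d‖ := mul_le_mul_of_nonneg_right (hΦ1 d') (norm_nonneg _)
            _ = ‖f t - d‖ := one_mul _
            _ ≤ q' := hq1.le⟩
      · rintro ⟨q', hq2, hq⟩
        exact lt_of_le_of_lt
          (key _ (hsub _ _ (hfs t) (hc_sub hdc)) _ (fun d' hd' => hq d' hd')) hq2
    rw [heq]
    refine MeasurableSet.iUnion fun q' => MeasurableSet.iUnion fun _ => ?_
    refine MeasurableSet.biInter hc_count fun d' _ => ?_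
    have hm : Measurable fun t => Φ d' (f t) - Φ d' d := (hw (Φ d')).sub_const _
    have : {t | Φ d' (f t - d) ≤ (q' : ℝ)} = (fun t => Φ d' (f t) - Φ d' d) ⁻¹' Set.Iic (q' : ℝ) := by
      ext t; simp [map_sub]
    rw [this]
    exact hm measurableSet_Iic
  -- measurability from open sets
  refine measurable_of_isOpen fun U hU => ?_
  have heq : f ⁻¹' U = ⋃ (d ∈ c) (q : ℚ)
      (_ : 0 < (q : ℝ) ∧ Metric.ball d (2 * q) ⊆ U), f ⁻¹' Metric.ball d q := by
    ext t
    simp only [Set.mem_preimage, Set.mem_iUnion]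
    constructor
    · intro ht
      obtain ⟨ε, hε, hballU⟩ := Metric.isOpen_iff.1 hU _ ht
      obtain ⟨q, hq0, hq3⟩ := exists_rat_btwn (show (0:ℝ) < ε/3 by linarith)
      obtain ⟨d, hdc, hdist⟩ := Metric.mem_closure_iff.1 (hc_dense (hfs t)) q (by exact_mod_cast hq0)
      refine ⟨d, hdc, q, ⟨by exact_mod_cast hq0, fun w hw => ?_⟩, ?_⟩
      · apply hballU
        rw [Metric.mem_ball] at *
        calc dist w (f t) ≤ dist w d + dist d (f t) := dist_triangle _ _ _
          _ < 2 * q + q := by rw [dist_comm d (f t)]; exact add_lt_add hw hdist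
          _ = 3 * q := by ring
          _ < ε := by linarith
      · rw [Metric.mem_ball]; exact hdist
    · rintro ⟨d, hdc, q, ⟨hq0, hsubU⟩, ht⟩
      apply hsubU
      rw [Metric.mem_ball] at *
      linarith
  rw [heq]
  refine MeasurableSet.biUnion hc_count fun d hdc => ?_
  exact MeasurableSet.iUnion fun q => MeasurableSet.iUnion fun _ => hball d hdc q

/-- Core of Orlicz–Pettis: weak subseries convergence forces the terms to tend to `0` in norm. -/
lemma core (y : ℕ → X)
    (h : ∀ M : Set ℕ, ∃ a : X, ∀ φ : X →L[ℝ] ℝ,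
      Tendsto (fun N => ∑ n ∈ (Finset.range N).filter (· ∈ M), φ (y n)) atTop (𝓝 (φ a))) :
    Tendsto (fun n => ‖y n‖) atTop (𝓝 0) := by
  borelize X
  choose S hS using h
  -- absolute summability of the scalar series
  have habs : ∀ φ : X →L[ℝ] ℝ, Summable fun n => |φ (y n)| := by
    intro φ
    set P : Set ℕ := {n | 0 ≤ φ (y n)} with hPdef
    have h1 : Tendsto (fun N => ∑ n ∈ Finset.range N, if n ∈ P then φ (y n) else 0)
        atTop (𝓝 (φ (S P))) := by
      have := hS P φ; simpa [Finset.sum_filter] using this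
    have h2 : Tendsto (fun N => ∑ n ∈ Finset.range N, if n ∈ Pᶜ then -φ (y n) else 0)
        atTop (𝓝 (-φ (S Pᶜ))) := by
      have := (hS Pᶜ φ).neg
      refine this.congr fun N => ?_
      rw [← Finset.sum_neg_distrib, Finset.sum_filter]
      exact Finset.sum_congr rfl fun a _ => by by_cases h : a ∈ Pᶜ <;> simp [h]
    have hnn1 : ∀ n, 0 ≤ if n ∈ P then φ (y n) else 0 := by
      intro n; by_cases hn : n ∈ P
      · simp only [if_pos hn]; exact hn
      · simp [hn]
    have hnn2 : ∀ n, 0 ≤ if n ∈ Pᶜ then -φ (y n) else 0 := by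
      intro n; by_cases hn : n ∈ Pᶜ
      · have : ¬ (0 ≤ φ (y n)) := hn
        simp only [if_pos hn]; linarith [lt_of_not_ge this]
      · simp [hn]
    have hmono : ∀ (g : ℕ → ℝ), (∀ n, 0 ≤ g n) → Monotone (fun N => ∑ n ∈ Finset.range N, g n) :=
      fun g hg N M hNM =>
        Finset.sum_le_sum_of_subset_of_nonneg (Finset.range_subset_range.2 hNM) (fun i _ _ => hg i)
    have hs1 : Summable fun n => if n ∈ P then φ (y n) else 0 :=
      summable_of_sum_range_le hnn1 fun N => (hmono _ hnn1).ge_of_tendsto h1 N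
    have hs2 : Summable fun n => if n ∈ Pᶜ then -φ (y n) else 0 :=
      summable_of_sum_range_le hnn2 fun N => (hmono _ hnn2).ge_of_tendsto h2 N
    refine (hs1.add hs2).congr fun n => ?_
    by_cases hn : n ∈ P
    · have h0 : 0 ≤ φ (y n) := hn
      simp [hn, abs_of_nonneg h0, hPdef, h0, not_lt.mpr h0]
    · have h0 : φ (y n) < 0 := lt_of_not_ge hn
      have hn' : n ∈ Pᶜ := hn
      simp [hn, hn', abs_of_neg h0]
  -- uniform bound on the weak sums
  obtain ⟨C, hC⟩ : ∃ C, ∀ M : Set ℕ, ‖S M‖ ≤ C := by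
    set g : Set ℕ → (StrongDual ℝ X) →L[ℝ] ℝ :=
      fun M => NormedSpace.inclusionInDoubleDual ℝ X (S M) with hg
    have hub : ∀ φ : StrongDual ℝ X, ∃ C, ∀ M : Set ℕ, ‖g M φ‖ ≤ C := by
      intro φ
      refine ⟨∑' n, |φ (y n)|, fun M => ?_⟩
      have hb : ∀ N, ‖∑ n ∈ (Finset.range N).filter (· ∈ M), φ (y n)‖ ≤ ∑' n, |φ (y n)| := by
        intro N
        calc ‖∑ n ∈ (Finset.range N).filter (· ∈ M), φ (y n)‖
            ≤ ∑ n ∈ (Finset.range N).filter (· ∈ M), |φ (y n)| := by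
              simpa [Real.norm_eq_abs] using
                Finset.abs_sum_le_sum_abs (fun n => φ (y n)) ((Finset.range N).filter (· ∈ M))
          _ ≤ ∑' n, |φ (y n)| := Summable.sum_le_tsum _ (fun k _ => abs_nonneg _) (habs φ)
      have ht := (hS M φ).norm
      exact le_of_tendsto ht (Eventually.of_forall hb)
    obtain ⟨C, hC⟩ := banach_steinhaus hub
    refine ⟨C, fun M => ?_⟩
    have hnorm : ‖g M‖ = ‖S M‖ := by
      have := (NormedSpace.inclusionInDoubleDualLi ℝ (E := X)).norm_map (S M)
      exact this
    rw [← hnorm]; exact hC M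
  -- the function f on the Cantor group
  set A : G → Set ℕ := fun t => {n | t n = 0} with hA
  set f : G → X := fun t => S (A t) - S ((A t)ᶜ) with hf
  have hφf : ∀ (t : G) (φ : X →L[ℝ] ℝ),
      Tendsto (fun N => ∑ k ∈ Finset.range N, r k t * φ (y k)) atTop (𝓝 (φ (f t))) := by
    intro t φ
    have h3 := (hS (A t) φ).sub (hS ((A t)ᶜ) φ)
    have h4 : φ (f t) = φ (S (A t)) - φ (S ((A t)ᶜ)) := by rw [hf, map_sub]
    rw [h4]
    refine h3.congr fun N => ?_
    rw [Finset.sum_filter, Finset.sum_filter, ← Finset.sum_sub_distrib]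
    refine Finset.sum_congr rfl fun k _ => ?_
    by_cases hk : t k = 0
    · have hmem : k ∈ A t := hk
      have hmem' : k ∉ (A t)ᶜ := fun hc => hc hmem
      simp [r, hk, hmem, hmem']
    · have hmem : k ∉ A t := hk
      have hmem' : k ∈ (A t)ᶜ := hmem
      simp [r, hk, hmem, hmem']
  -- range considerations
  set Y := (Submodule.span ℝ (Set.range y)).topologicalClosure with hY
  have hSY : ∀ M : Set ℕ, S M ∈ Y := by
    intro M
    by_contra hM
    obtain ⟨φ, u, hu1, hu2⟩ := geometric_hahn_banach_closed_point
      Y.convex (Submodule.isClosed_topologicalClosure _) hM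
    have hle : φ (S M) ≤ u := by
      refine le_of_tendsto (hS M φ) (Eventually.of_forall fun N => ?_)
      rw [← map_sum]
      refine (hu1 _ ?_).le
      refine Submodule.sum_mem _ fun n _ => ?_
      exact Submodule.le_topologicalClosure _ (Submodule.subset_span ⟨n, rfl⟩)
    linarith
  have hfY : ∀ t, f t ∈ Y := fun t => sub_mem (hSY _) (hSY _)
  have hsep : IsSeparable (Y : Set X) := by
    have h2 := ((Set.countable_range y).isSeparable.span (R := ℝ)).closure
    rwa [← Submodule.topologicalClosure_coe] at h2
  -- measurability and integrability of f
  have hw : ∀ φ : X →L[ℝ] ℝ, Measurable fun t : G => φ (f t) := by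
    intro φ
    refine measurable_of_tendsto_metrizable
      (f := fun N t => ∑ k ∈ Finset.range N, r k t * φ (y k)) ?_ ?_
    · exact fun N =>
        (continuous_finset_sum _ fun k _ => (r_continuous k).mul continuous_const).measurable
    · rw [tendsto_pi_nhds]; exact fun t => hφf t φ
  have hmeas : Measurable f :=
    measurable_of_weakly_measurable hsep hfY (fun a b ha hb => sub_mem ha hb) hw
  have hsm : StronglyMeasurable f :=
    stronglyMeasurable_iff_measurable_separable.2
      ⟨hmeas, hsep.mono (Set.range_subset_iff.2 hfY)⟩
  have hfb : ∀ t, ‖f t‖ ≤ 2 * C := by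
    intro t
    calc ‖f t‖ ≤ ‖S (A t)‖ + ‖S ((A t)ᶜ)‖ := norm_sub_le _ _
      _ ≤ C + C := add_le_add (hC _) (hC _)
      _ = 2 * C := by ring
  have hint : Integrable f μG :=
    (integrable_const (2*C)).mono' hsm.aestronglyMeasurable
      (Eventually.of_forall fun t => by simpa using hfb t)
  -- the Fourier coefficient identity
  have hid : ∀ n, y n = ∫ t, r n t • f t ∂μG := by
    intro n
    refine (NormedSpace.eq_iff_forall_dual_eq ℝ).2 fun φ => ?_
    have hcomm : φ (∫ t, r n t • f t ∂μG) = ∫ t, r n t * φ (f t) ∂μG := by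
      rw [← φ.integral_comp_comm (integrable_rsmul hint n)]
      refine integral_congr_ae (Eventually.of_forall fun t => ?_)
      show φ (r n t • f t) = r n t * φ (f t)
      simp
    have hdct : Tendsto (fun N => ∫ t, r n t * (∑ k ∈ Finset.range N, r k t * φ (y k)) ∂μG)
        atTop (𝓝 (∫ t, r n t * φ (f t) ∂μG)) := by
      refine tendsto_integral_of_dominated_convergence (fun _ => ∑' k, |φ (y k)|) ?_ ?_ ?_ ?_
      · exact fun N => ((r_continuous n).mul
          (continuous_finset_sum _ fun k _ => (r_continuous k).mul continuous_const)).aestronglyMeasurable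
      · exact integrable_const _
      · intro N
        refine Eventually.of_forall fun t => ?_
        rw [Real.norm_eq_abs, abs_mul, r_abs, one_mul]
        calc |∑ k ∈ Finset.range N, r k t * φ (y k)|
            ≤ ∑ k ∈ Finset.range N, |r k t * φ (y k)| := Finset.abs_sum_le_sum_abs _ _
          _ = ∑ k ∈ Finset.range N, |φ (y k)| := by
              refine Finset.sum_congr rfl fun k _ => ?_
              rw [abs_mul, r_abs, one_mul]
          _ ≤ ∑' k, |φ (y k)| := Summable.sum_le_tsum _ (fun k _ => abs_nonneg _) (habs φ)
      · exact Eventually.of_forall fun t => ((hφf t φ).const_mul _)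
    have hval : ∀ N, n < N →
        ∫ t, r n t * (∑ k ∈ Finset.range N, r k t * φ (y k)) ∂μG = φ (y n) := by
      intro N hN
      have h1 : (fun t => r n t * ∑ k ∈ Finset.range N, r k t * φ (y k))
          = fun t => ∑ k ∈ Finset.range N, (fun s => r n s * r k s) t * φ (y k) := by
        funext t; rw [Finset.mul_sum]; exact Finset.sum_congr rfl fun k _ => by ring
      rw [h1, integral_finset_sum _ (fun k _ => (r_integrable_mul n k).mul_const _)]
      have h2 : ∀ k, ∫ t, (fun s => r n s * r k s) t * φ (y k) ∂μG
          = (if n = k then (1:ℝ) else 0) * φ (y k) := by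
        intro k; rw [integral_mul_const, integral_r_mul_r]
      simp only [h2]
      simp [ite_mul, Finset.sum_ite_eq, Finset.mem_range.mpr hN]
    have hconst : Tendsto (fun N => ∫ t, r n t * (∑ k ∈ Finset.range N, r k t * φ (y k)) ∂μG)
        atTop (𝓝 (φ (y n))) := by
      refine tendsto_const_nhds.congr' ?_
      filter_upwards [eventually_ge_atTop (n+1)] with N hN
      exact (hval N (Nat.lt_of_lt_of_le (Nat.lt_succ_self n) hN)).symm
    have := tendsto_nhds_unique hconst hdct
    rw [this, hcomm]
  have h0 : Tendsto y atTop (𝓝 0) := by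
    have := tendsto_integral_rsmul_zero hint
    exact this.congr fun n => (hid n).symm
  simpa using h0.norm

end OPaux

end OrliczPettisAux

open Filter Topology Classical

/-- **Orlicz–Pettis theorem.** If every subseries of `∑ x n` converges weakly in a
Banach space `X`, then every subseries converges in norm. -/
theorem orlicz_pettis {X : Type*} [NormedAddCommGroup X] [NormedSpace ℝ X]
    [CompleteSpace X] (x : ℕ → X)
    (hweak : ∀ M : Set ℕ, ∃ a : X, ∀ φ : X →L[ℝ] ℝ,
      Tendsto (fun N => ∑ n ∈ (Finset.range N).filter (· ∈ M), φ (x n)) atTop (𝓝 (φ a))) :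
    ∀ M : Set ℕ, ∃ a : X,
      Tendsto (fun N => ∑ n ∈ (Finset.range N).filter (· ∈ M), x n) atTop (𝓝 a) := by
  intro M
  set p : ℕ → X := fun N => ∑ n ∈ (Finset.range N).filter (· ∈ M), x n with hp
  refine cauchySeq_tendsto_of_complete ?_
  by_contra hnc
  rw [Metric.cauchySeq_iff] at hnc
  push_neg at hnc
  obtain ⟨ε, hε, hnc⟩ := hnc
  -- a choice function producing bad pairs above any threshold
  have hex : ∀ K : ℕ, ∃ pr : ℕ × ℕ, K ≤ pr.1 ∧ pr.1 < pr.2 ∧ ε ≤ ‖p pr.2 - p pr.1‖ := by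
    intro K
    obtain ⟨m, hm, n, hn, hd⟩ := hnc K
    rcases lt_trichotomy m n with hlt | rfl | hlt
    · exact ⟨(m, n), hm, hlt, by rwa [dist_eq_norm, norm_sub_rev] at hd⟩
    · exact absurd hd (by simpa using hε)
    · exact ⟨(n, m), hn, hlt, by rwa [dist_eq_norm] at hd⟩
  choose g hg1 hg2 hg3 using hex
  set sq : ℕ → ℕ × ℕ := fun k => Nat.rec (g 0) (fun _ pr => g pr.2) k with hsq
  set a : ℕ → ℕ := fun k => (sq k).1 with ha
  set b : ℕ → ℕ := fun k => (sq k).2 with hb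
  have hab : ∀ k, a k < b k := fun k => by
    cases k with
    | zero => exact hg2 0
    | succ k => exact hg2 (b k)
  have hba : ∀ k, b k ≤ a (k+1) := fun k => hg1 (b k)
  have hyε : ∀ k, ε ≤ ‖p (b k) - p (a k)‖ := fun k => by
    cases k with
    | zero => exact hg3 0
    | succ k => exact hg3 (b k)
  set y : ℕ → X := fun k => p (b k) - p (a k) with hy
  -- monotonicity facts
  have hmono1 : ∀ j k, j < k → b j ≤ a k := by
    intro j k hjk
    induction k with
    | zero => omega
    | succ k ih =>
      rcases Nat.lt_succ_iff_lt_or_eq.1 hjk with h | h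
      · exact le_trans (le_trans (ih h) (hab k).le) (hba k)
      · subst h; exact hba j
  have hbmono : ∀ j k, j ≤ k → b j ≤ b k := by
    intro j k hjk
    rcases eq_or_lt_of_le hjk with rfl | h
    · exact le_refl _
    · exact le_trans (hmono1 j k h) (hab k).le
  -- the cumulative index function
  set c : ℕ → ℕ := fun K => Nat.rec 0 (fun k _ => b k) K with hc
  have hc0 : c 0 = 0 := rfl
  have hcs : ∀ K, c (K+1) = b K := fun K => rfl
  have hcle : ∀ K, c K ≤ a K := by
    intro K
    cases K with
    | zero => exact Nat.zero_le _
    | succ K => rw [hcs]; exact hba K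
  have hbk : ∀ k, k ≤ b k := by
    intro k
    induction k with
    | zero => exact Nat.zero_le _
    | succ k ih => have h1 := hba k; have h2 := hab (k+1); omega
  -- the subseries sets
  set MA : Set ℕ → Set ℕ := fun A => {n | n ∈ M ∧ ∃ k, k ∈ A ∧ a k ≤ n ∧ n < b k} with hMA
  set FM : ℕ → X := fun n => if n ∈ M then x n else 0 with hFM
  have hpF : ∀ N, p N = ∑ n ∈ Finset.range N, FM n := by
    intro N; simp only [hp]; rw [Finset.sum_filter]
  -- the key combinatorial identity
  have key : ∀ (A : Set ℕ) (K : ℕ),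
      (∑ k ∈ Finset.range K, if k ∈ A then y k else 0)
      = ∑ n ∈ Finset.range (c K), (if n ∈ MA A then x n else 0) := by
    intro A K
    induction K with
    | zero => simp [hc0]
    | succ K ih =>
      rw [Finset.sum_range_succ, ih, hcs]
      have hsplit : ∑ n ∈ Finset.range (b K), (if n ∈ MA A then x n else 0)
          = (∑ n ∈ Finset.range (c K), (if n ∈ MA A then x n else 0))
            + ∑ n ∈ Finset.Ico (c K) (b K), (if n ∈ MA A then x n else 0) := by
        rw [Finset.range_eq_Ico, Finset.range_eq_Ico]
        exact (Finset.sum_Ico_consecutive (fun n => if n ∈ MA A then x n else 0) (Nat.zero_le (c K))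
          (le_trans (hcle K) (hab K).le)).symm
      rw [hsplit]
      congr 1
      -- now: if K ∈ A then y K else 0 = ∑ over Ico (c K) (b K)
      by_cases hKA : K ∈ A
      · rw [if_pos hKA]
        have hyK : y K = ∑ n ∈ Finset.Ico (a K) (b K), FM n := by
          simp only [hy]
          have := Finset.sum_Ico_consecutive FM (Nat.zero_le (a K)) (hab K).le
          rw [hpF, hpF, Finset.range_eq_Ico, Finset.range_eq_Ico, ← this]
          abel
        have hIco : ∑ n ∈ Finset.Ico (c K) (b K), (if n ∈ MA A then x n else 0)
            = (∑ n ∈ Finset.Ico (c K) (a K), (if n ∈ MA A then x n else 0))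
              + ∑ n ∈ Finset.Ico (a K) (b K), (if n ∈ MA A then x n else 0) := by
          rw [Finset.sum_Ico_consecutive _ (hcle K) (hab K).le]
        rw [hIco]
        have hz : ∑ n ∈ Finset.Ico (c K) (a K), (if n ∈ MA A then x n else 0) = 0 := by
          refine Finset.sum_eq_zero fun n hn => ?_
          rw [Finset.mem_Ico] at hn
          rw [if_neg]
          rintro ⟨-, k, hkA', h1, h2⟩
          rcases lt_trichotomy k K with hk | rfl | hk
          · have hbc : b k ≤ c K := by
              cases K with
              | zero => omega
              | succ K' => rw [hcs]; exact hbmono k K' (by omega)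
            omega
          · omega
          · have := hmono1 K k hk
            have := hab K
            omega
        have hsame : ∑ n ∈ Finset.Ico (a K) (b K), (if n ∈ MA A then x n else 0)
            = ∑ n ∈ Finset.Ico (a K) (b K), FM n := by
          refine Finset.sum_congr rfl fun n hn => ?_
          rw [Finset.mem_Ico] at hn
          by_cases hnM : n ∈ M
          · rw [if_pos ⟨hnM, K, hKA, hn.1, hn.2⟩, hFM]; simp [hnM]
          · rw [if_neg (fun hc' => hnM hc'.1), hFM]; simp [hnM]
        rw [hz, hsame, zero_add, hyK]
      · rw [if_neg hKA]
        refine (Finset.sum_eq_zero fun n hn => ?_).symm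
        rw [Finset.mem_Ico] at hn
        rw [if_neg]
        rintro ⟨-, k, hkA', h1, h2⟩
        rcases lt_trichotomy k K with hk | rfl | hk
        · have hbc : b k ≤ c K := by
            cases K with
            | zero => omega
            | succ K' => rw [hcs]; exact hbmono k K' (by omega)
          omega
        · exact hKA hkA'
        · have := hmono1 K k hk
          omega
  -- `c` tends to infinity
  have hctop : Tendsto c atTop atTop := by
    refine tendsto_atTop_atTop.2 fun i => ⟨i + 1, fun K hK => ?_⟩
    cases K with
    | zero => omega
    | succ K' =>
      have h1 : c (K' + 1) = b K' := hcs K'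
      have := hbk K'
      omega
  -- verify the core hypothesis for y
  have hcore : Tendsto (fun k => ‖y k‖) atTop (𝓝 0) := by
    refine OPaux.core y fun A => ?_
    obtain ⟨aa, haa⟩ := hweak (MA A)
    refine ⟨aa, fun φ => ?_⟩
    have hcomp := (haa φ).comp hctop
    refine hcomp.congr fun K => ?_
    have h1 := congrArg φ (key A K)
    rw [map_sum, map_sum] at h1
    simp only [Function.comp_apply]
    rw [Finset.sum_filter, Finset.sum_filter]
    refine Eq.trans ?_ (Eq.trans h1.symm ?_)
    · exact Finset.sum_congr rfl fun n _ => by by_cases hn : n ∈ MA A <;> simp [hn]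
    · exact Finset.sum_congr rfl fun k _ => by by_cases hk : k ∈ A <;> simp [hk]
  -- contradiction
  have : ε ≤ 0 := ge_of_tendsto hcore (Eventually.of_forall fun k => le_trans (hyε k) (le_refl _))
  linarith
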